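/- Fix n ≥ 1. In the C*-algebra C([0,1], M_n(ℂ) ⊗ M_{n+1}(ℂ)) of continuous matrix-valued functions, the elements defined by ṽf_{j,k}(t) = e_{j,k} ⊗ (1_{n+1} − t·e_{n+1,n+1}) (1 ≤ j,k ≤ n) and ṽs(t) = √t · ∑_{i=1}^n e_{1,i} ⊗ e_{i,n+1} form a dimension-drop system of size n; that is, all have norm at most 1, ṽf_{j,k}* = ṽf_{k,j}, ṽf_{j,k} ṽf_{l,m} = δ_{k,l} ṽf_{j,j} ṽf_{j,m}, ṽf_{1,1} ṽs = ṽs, and ∑_{j=1}^n ṽf_{j,j} + ṽs*ṽs = 1. Moreover, ṽs*ṽs + ∑_{j=1}^n ṽf_{j,1} ṽs ṽs* ṽf_{1,j} equals the function t ↦ t·1. -/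

import Mathlib

open Matrix
open scoped Kronecker Matrix.Norms.L2Operator

set_option linter.unusedSectionVars false

section helpers
variable {m n : Type*} [Fintype m] [Fintype n] [DecidableEq m] [DecidableEq n]

lemma kronCT (A : Matrix m m ℂ) (B : Matrix n n ℂ) : (A ⊗ₖ B)ᴴ = Aᴴ ⊗ₖ Bᴴ := by
  ext ⟨a,b⟩ ⟨c,d⟩
  simp [conjTranspose_apply, star_mul']

lemma stdCT (i j : m) : (single i j (1:ℂ))ᴴ = single j i 1 := by
  ext a b
  simp [conjTranspose_apply, single, apply_ite, and_comm]

lemma stdCT' (i j : m) (c : ℂ) : (single i j c)ᴴ = single j i (star c) := by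
  ext a b
  simp only [conjTranspose_apply, single, of_apply]
  rw [apply_ite star, star_zero]
  exact if_congr and_comm rfl rfl

lemma sumDiag : ∑ i : m, single i i (1:ℂ) = 1 := by
  ext a b
  by_cases h : a = b
  · subst h
    simp [Matrix.sum_apply, single, one_apply]
  · simp only [Matrix.sum_apply, single, of_apply, one_apply, h, if_false]
    rw [Finset.sum_eq_zero]
    intro x _
    rw [if_neg]
    rintro ⟨rfl, rfl⟩
    exact h rfl

lemma projNorm (p : Matrix m m ℂ) (h1 : pᴴ = p) (h2 : p * p = p) : ‖p‖ ≤ 1 := by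
  have h := Matrix.l2_opNorm_conjTranspose_mul_self p
  rw [h1, h2] at h
  nlinarith [norm_nonneg p]

lemma norm_le_one_of_CTmul (A : Matrix m m ℂ) (h1 : (Aᴴ * A)ᴴ = Aᴴ * A)
    (h2 : (Aᴴ * A) * (Aᴴ * A) = Aᴴ * A) : ‖A‖ ≤ 1 := by
  have h := Matrix.l2_opNorm_conjTranspose_mul_self A
  have := projNorm _ h1 h2
  nlinarith [norm_nonneg A]

lemma sum_kron {ι : Type*} (s : Finset ι) (f : ι → Matrix m m ℂ) (B : Matrix n n ℂ) :
    (∑ i ∈ s, f i) ⊗ₖ B = ∑ i ∈ s, f i ⊗ₖ B := by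
  ext ⟨a,b⟩ ⟨c,d⟩
  simp [Matrix.sum_apply, Finset.sum_mul]

lemma kron_sum {ι : Type*} (s : Finset ι) (A : Matrix m m ℂ) (f : ι → Matrix n n ℂ) :
    A ⊗ₖ (∑ i ∈ s, f i) = ∑ i ∈ s, A ⊗ₖ f i := by
  ext ⟨a,b⟩ ⟨c,d⟩
  simp [Matrix.sum_apply, Finset.mul_sum]

lemma kron_sub (A : Matrix m m ℂ) (B C : Matrix n n ℂ) :
    A ⊗ₖ (B - C) = A ⊗ₖ B - A ⊗ₖ C := by
  ext ⟨a,b⟩ ⟨c,d⟩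
  simp [mul_sub]

lemma kron_add (A : Matrix m m ℂ) (B C : Matrix n n ℂ) :
    A ⊗ₖ (B + C) = A ⊗ₖ B + A ⊗ₖ C := by
  ext ⟨a,b⟩ ⟨c,d⟩
  simp [mul_add]

end helpers

/-- `D t = 1 - t e_{last,last}`. -/
noncomputable def Dmat (n : ℕ) (t : ℝ) : Matrix (Fin (n+1)) (Fin (n+1)) ℂ :=
  (1 : Matrix (Fin (n + 1)) (Fin (n + 1)) ℂ) -
    (t : ℂ) • single (Fin.last n) (Fin.last n) (1 : ℂ)

/-- `S = ∑ i, e_{0,i} ⊗ e_{i,last}`. -/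
noncomputable def Smat (n : ℕ) [NeZero n] : Matrix (Fin n × Fin (n + 1)) (Fin n × Fin (n + 1)) ℂ :=
  ∑ i : Fin n,
    (single (0 : Fin n) i (1 : ℂ)) ⊗ₖ (single i.castSucc (Fin.last n) (1 : ℂ))

/-- The function `ṽf j k : [0,1] → Mₙ(ℂ) ⊗ M_{n+1}(ℂ)`,
`ṽf j k (t) = e_{j,k} ⊗ (1_{n+1} - t • e_{n+1,n+1})`.  Indices in `Fin n` (resp. `Fin (n+1)`),
with `0` playing the role of the index `1` and `Fin.last n` the role of the index `n+1`. -/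
noncomputable def vfMat (n : ℕ) (j k : Fin n) (t : ℝ) :
    Matrix (Fin n × Fin (n + 1)) (Fin n × Fin (n + 1)) ℂ :=
  (single j k (1 : ℂ)) ⊗ₖ
    ((1 : Matrix (Fin (n + 1)) (Fin (n + 1)) ℂ) -
      (t : ℂ) • single (Fin.last n) (Fin.last n) (1 : ℂ))

/-- The function `ṽs : [0,1] → Mₙ(ℂ) ⊗ M_{n+1}(ℂ)`, `ṽs (t) = √t • ∑ i, e_{1,i} ⊗ e_{i,n+1}`. -/
noncomputable def vsMat (n : ℕ) [NeZero n] (t : ℝ) :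
    Matrix (Fin n × Fin (n + 1)) (Fin n × Fin (n + 1)) ℂ :=
  ((Real.sqrt t : ℝ) : ℂ) • ∑ i : Fin n,
    (single (0 : Fin n) i (1 : ℂ)) ⊗ₖ
      (single i.castSucc (Fin.last n) (1 : ℂ))

lemma vfMat_eq (n : ℕ) (j k : Fin n) (t : ℝ) :
    vfMat n j k t = single j k 1 ⊗ₖ Dmat n t := rfl

lemma vsMat_eq (n : ℕ) [NeZero n] (t : ℝ) :
    vsMat n t = ((Real.sqrt t : ℝ) : ℂ) • Smat n := rfl

lemma Dmat_CT (n : ℕ) (t : ℝ) : (Dmat n t)ᴴ = Dmat n t := by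
  simp [Dmat, conjTranspose_sub, conjTranspose_smul, stdCT', Complex.conj_ofReal]

lemma Dmat_mul_cast (n : ℕ) (t : ℝ) (i : Fin n) (x : Fin (n+1)) (c : ℂ) :
    Dmat n t * single i.castSucc x c = single i.castSucc x c := by
  rw [Dmat, sub_mul, one_mul, smul_mul_assoc,
    single_mul_single_of_ne _ _ _ _ (Fin.castSucc_lt_last i).ne']
  simp

lemma cast_mul_Dmat (n : ℕ) (t : ℝ) (i : Fin n) (x : Fin (n+1)) (c : ℂ) :
    single x i.castSucc c * Dmat n t = single x i.castSucc c := by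
  rw [Dmat, mul_sub, mul_one, mul_smul_comm,
    single_mul_single_of_ne _ _ _ _ (Fin.castSucc_lt_last i).ne]
  simp

/-- `SᴴS = 1 ⊗ e_{last,last}`. -/
lemma SHS (n : ℕ) [NeZero n] : (Smat n)ᴴ * Smat n =
    (1 : Matrix (Fin n) (Fin n) ℂ) ⊗ₖ single (Fin.last n) (Fin.last n) 1 := by
  rw [Smat, conjTranspose_sum]
  simp only [kronCT, stdCT]
  rw [Finset.sum_mul_sum]
  have key : ∀ i j : Fin n,
      (single i (0:Fin n) (1:ℂ) ⊗ₖ single (Fin.last n) i.castSucc (1:ℂ)) *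
        (single (0:Fin n) j (1:ℂ) ⊗ₖ single j.castSucc (Fin.last n) (1:ℂ)) =
      if j = i then single i i (1:ℂ) ⊗ₖ single (Fin.last n) (Fin.last n) (1:ℂ)
        else 0 := by
    intro i j
    rw [← mul_kronecker_mul]
    split_ifs with h
    · subst h
      simp
    · rw [single_mul_single_of_ne _ _ _ _
        (show i.castSucc ≠ j.castSucc from fun hc => h (Fin.castSucc_injective n hc).symm)]
      simp
  calc (∑ i : Fin n, ∑ j : Fin n,
        (single i (0:Fin n) (1:ℂ) ⊗ₖ single (Fin.last n) i.castSucc (1:ℂ)) *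
          (single (0:Fin n) j (1:ℂ) ⊗ₖ single j.castSucc (Fin.last n) (1:ℂ)))
      = ∑ i : Fin n, single i i (1:ℂ) ⊗ₖ single (Fin.last n) (Fin.last n) (1:ℂ) := by
        refine Finset.sum_congr rfl fun i _ => ?_
        rw [Finset.sum_congr rfl fun j _ => key i j]
        simp
    _ = _ := by rw [← sum_kron, sumDiag]

/-- `SSᴴ = e_{0,0} ⊗ ∑ i, e_{i,i}` (castSucc diag). -/
lemma SSH (n : ℕ) [NeZero n] : Smat n * (Smat n)ᴴ =
    single (0 : Fin n) (0 : Fin n) 1 ⊗ₖ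
      ∑ i : Fin n, single i.castSucc i.castSucc (1:ℂ) := by
  rw [Smat, conjTranspose_sum]
  simp only [kronCT, stdCT]
  rw [Finset.sum_mul_sum]
  have key : ∀ i j : Fin n,
      (single (0:Fin n) i (1:ℂ) ⊗ₖ single i.castSucc (Fin.last n) (1:ℂ)) *
        (single j (0:Fin n) (1:ℂ) ⊗ₖ single (Fin.last n) j.castSucc (1:ℂ)) =
      if j = i then single (0:Fin n) (0:Fin n) (1:ℂ) ⊗ₖ
          single i.castSucc i.castSucc (1:ℂ) else 0 := by
    intro i j
    rw [← mul_kronecker_mul]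
    split_ifs with h
    · subst h
      simp
    · rw [single_mul_single_of_ne _ _ _ _ (fun hc => h hc.symm)]
      simp
  calc (∑ i : Fin n, ∑ j : Fin n,
        (single (0:Fin n) i (1:ℂ) ⊗ₖ single i.castSucc (Fin.last n) (1:ℂ)) *
          (single j (0:Fin n) (1:ℂ) ⊗ₖ single (Fin.last n) j.castSucc (1:ℂ)))
      = ∑ i : Fin n, single (0:Fin n) (0:Fin n) (1:ℂ) ⊗ₖ
          single i.castSucc i.castSucc (1:ℂ) := by
        refine Finset.sum_congr rfl fun i _ => ?_
        rw [Finset.sum_congr rfl fun j _ => key i j]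
        simp
    _ = _ := by rw [← kron_sum]

lemma kron_smul' {m n : Type*} [Fintype m] [Fintype n] [DecidableEq m] [DecidableEq n]
    (r : ℂ) (A : Matrix m m ℂ) (B : Matrix n n ℂ) : A ⊗ₖ (r • B) = r • (A ⊗ₖ B) := by
  ext ⟨a,b⟩ ⟨c,d⟩
  simp [mul_left_comm, mul_comm, mul_assoc]

lemma sqrtC_mul_self (t : ℝ) (ht : 0 ≤ t) :
    ((Real.sqrt t : ℝ) : ℂ) * ((Real.sqrt t : ℝ) : ℂ) = (t : ℂ) := by
  rw [← Complex.ofReal_mul, Real.mul_self_sqrt ht]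

lemma starVs_mul_vs (n : ℕ) [NeZero n] (t : ℝ) (ht : 0 ≤ t) :
    star (vsMat n t) * vsMat n t =
      (t : ℂ) • ((1 : Matrix (Fin n) (Fin n) ℂ) ⊗ₖ
        single (Fin.last n) (Fin.last n) 1) := by
  rw [vsMat_eq, star_smul, smul_mul_assoc, mul_smul_comm, smul_smul,
    show star ((Real.sqrt t : ℝ) : ℂ) = ((Real.sqrt t : ℝ) : ℂ) from Complex.conj_ofReal _,
    sqrtC_mul_self t ht, Matrix.star_eq_conjTranspose, SHS]

lemma vs_mul_starVs (n : ℕ) [NeZero n] (t : ℝ) (ht : 0 ≤ t) :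
    vsMat n t * star (vsMat n t) =
      (t : ℂ) • (single (0 : Fin n) (0 : Fin n) 1 ⊗ₖ
        ∑ i : Fin n, single i.castSucc i.castSucc (1:ℂ)) := by
  rw [vsMat_eq, star_smul, smul_mul_assoc, mul_smul_comm, smul_smul,
    show star ((Real.sqrt t : ℝ) : ℂ) = ((Real.sqrt t : ℝ) : ℂ) from Complex.conj_ofReal _,
    sqrtC_mul_self t ht, Matrix.star_eq_conjTranspose, SSH]

/-- in `C([0,1], Mₙ(ℂ) ⊗ M_{n+1}(ℂ))`, the elements `ṽf j k` and `ṽs` form a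
dimension-drop system of size `n` (stated pointwise on `[0,1]`; the norm is the L²-operator
norm on matrices, so the sup-norm conditions are exactly the pointwise conditions below);
moreover `ṽs* ṽs + ∑ j, ṽf j 0 * ṽs ṽs* * ṽf 0 j` is the function `t ↦ t • 1`. -/
theorem vfMat_vsMat_isDimDropSystem (n : ℕ) [NeZero n] :
    (∀ t ∈ Set.Icc (0 : ℝ) 1, ‖vsMat n t‖ ≤ 1) ∧
      (∀ j k : Fin n, ∀ t ∈ Set.Icc (0 : ℝ) 1, ‖vfMat n j k t‖ ≤ 1) ∧
      (∀ j k : Fin n, ∀ t ∈ Set.Icc (0 : ℝ) 1, star (vfMat n j k t) = vfMat n k j t) ∧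
      (∀ j k l m : Fin n, ∀ t ∈ Set.Icc (0 : ℝ) 1,
        vfMat n j k t * vfMat n l m t =
          if k = l then vfMat n j j t * vfMat n j m t else 0) ∧
      (∀ t ∈ Set.Icc (0 : ℝ) 1, vfMat n 0 0 t * vsMat n t = vsMat n t) ∧
      (∀ t ∈ Set.Icc (0 : ℝ) 1,
        (∑ j, vfMat n j j t) + star (vsMat n t) * vsMat n t = 1) ∧
      (∀ t ∈ Set.Icc (0 : ℝ) 1,
        star (vsMat n t) * vsMat n t +
            ∑ j, vfMat n j 0 t * (vsMat n t * star (vsMat n t)) * vfMat n 0 j t =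
          (t : ℂ) • (1 : Matrix (Fin n × Fin (n + 1)) (Fin n × Fin (n + 1)) ℂ)) := by
  refine ⟨?p1, ?p2, ?p3, ?p4, ?p5, ?p6, ?p7⟩
  case p1 =>
    intro t ht
    rw [vsMat_eq, norm_smul]
    have hS : ‖Smat n‖ ≤ 1 := by
      apply norm_le_one_of_CTmul
      · rw [SHS, kronCT, conjTranspose_one, stdCT]
      · rw [SHS, ← mul_kronecker_mul, one_mul, single_mul_single_same, one_mul]
    have hc : ‖((Real.sqrt t : ℝ) : ℂ)‖ ≤ 1 := by
      rw [Complex.norm_real, Real.norm_eq_abs, abs_of_nonneg (Real.sqrt_nonneg t)]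
      have := Real.sqrt_le_sqrt ht.2
      simpa using this
    nlinarith [norm_nonneg (Smat n), norm_nonneg ((Real.sqrt t : ℝ) : ℂ)]
  case p2 =>
    intro j k t ht
    have hd : vfMat n j k t = (single j k 1 ⊗ₖ (1 : Matrix (Fin (n+1)) (Fin (n+1)) ℂ)) *
        ((1 : Matrix (Fin n) (Fin n) ℂ) ⊗ₖ Dmat n t) := by
      rw [← mul_kronecker_mul, mul_one, one_mul, vfMat_eq]
    rw [hd]
    refine le_trans (Matrix.l2_opNorm_mul _ _) ?_
    have h1 : ‖single j k (1:ℂ) ⊗ₖ (1 : Matrix (Fin (n+1)) (Fin (n+1)) ℂ)‖ ≤ 1 := by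
      apply norm_le_one_of_CTmul
      · rw [kronCT, stdCT, conjTranspose_one, ← mul_kronecker_mul, single_mul_single_same,
          one_mul, one_mul, kronCT, stdCT, conjTranspose_one]
      · rw [kronCT, stdCT, conjTranspose_one, ← mul_kronecker_mul, single_mul_single_same,
          one_mul, one_mul, ← mul_kronecker_mul, single_mul_single_same, one_mul, one_mul]
    have h2 : ‖(1 : Matrix (Fin n) (Fin n) ℂ) ⊗ₖ Dmat n t‖ ≤ 1 := by
      have hD : (1 : Matrix (Fin n) (Fin n) ℂ) ⊗ₖ Dmat n t
          = ((1 - t : ℝ) : ℂ) • (1 : Matrix (Fin n × Fin (n+1)) (Fin n × Fin (n+1)) ℂ)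
            + ((t : ℝ) : ℂ) • ((1 : Matrix (Fin n) (Fin n) ℂ) ⊗ₖ
              ((1 : Matrix (Fin (n+1)) (Fin (n+1)) ℂ) -
                single (Fin.last n) (Fin.last n) 1)) := by
        ext ⟨a,b⟩ ⟨c,d⟩
        simp only [Dmat, kroneckerMap_apply, Matrix.add_apply, Matrix.smul_apply,
          Matrix.sub_apply, Matrix.one_apply, single, of_apply, smul_eq_mul,
          Prod.mk.injEq]
        push_cast
        split_ifs <;> try ring
        all_goals tauto
      rw [hD]
      refine le_trans (norm_add_le _ _) ?_
      rw [norm_smul, norm_smul]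
      have e1 : ‖(1 : Matrix (Fin n × Fin (n+1)) (Fin n × Fin (n+1)) ℂ)‖ ≤ 1 := by
        apply projNorm <;> simp
      have e2 : ‖(1 : Matrix (Fin n) (Fin n) ℂ) ⊗ₖ
          ((1 : Matrix (Fin (n+1)) (Fin (n+1)) ℂ) -
            single (Fin.last n) (Fin.last n) 1)‖ ≤ 1 := by
        apply projNorm
        · rw [kronCT, conjTranspose_one, conjTranspose_sub, conjTranspose_one, stdCT]
        · have hFF : single (Fin.last n) (Fin.last n) (1:ℂ) *
              single (Fin.last n) (Fin.last n) 1 =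
              single (Fin.last n) (Fin.last n) 1 := by
            rw [single_mul_single_same, one_mul]
          have h2 : ((1 : Matrix (Fin (n+1)) (Fin (n+1)) ℂ) -
              single (Fin.last n) (Fin.last n) 1) *
              ((1 : Matrix (Fin (n+1)) (Fin (n+1)) ℂ) -
                single (Fin.last n) (Fin.last n) 1) =
              (1 : Matrix (Fin (n+1)) (Fin (n+1)) ℂ) -
                single (Fin.last n) (Fin.last n) 1 := by
            rw [mul_sub, mul_one, sub_mul, one_mul, hFF, sub_self, sub_zero]
          rw [← mul_kronecker_mul, one_mul, h2]
      have n1 : ‖((1 - t : ℝ) : ℂ)‖ = 1 - t := by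
        rw [Complex.norm_real, Real.norm_eq_abs, abs_of_nonneg (by linarith [ht.2])]
      have n2 : ‖((t : ℝ) : ℂ)‖ = t := by
        rw [Complex.norm_real, Real.norm_eq_abs, abs_of_nonneg ht.1]
      rw [n1, n2]
      nlinarith [ht.1, ht.2]
    nlinarith [norm_nonneg (single j k (1:ℂ) ⊗ₖ (1 : Matrix (Fin (n+1)) (Fin (n+1)) ℂ)),
      norm_nonneg ((1 : Matrix (Fin n) (Fin n) ℂ) ⊗ₖ Dmat n t)]
  case p3 =>
    intro j k t ht
    rw [vfMat_eq, vfMat_eq, Matrix.star_eq_conjTranspose, kronCT, stdCT, Dmat_CT]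
  case p4 =>
    intro j k l m t ht
    rw [vfMat_eq n j k, vfMat_eq n l m, ← mul_kronecker_mul]
    by_cases h : k = l
    · subst h
      rw [if_pos rfl, vfMat_eq, vfMat_eq, ← mul_kronecker_mul,
        single_mul_single_same, single_mul_single_same]
    · rw [if_neg h, single_mul_single_of_ne _ _ _ _ h]
      simp
  case p5 =>
    intro t ht
    rw [vfMat_eq, vsMat_eq, mul_smul_comm, Smat, Finset.mul_sum]
    congr 1
    refine Finset.sum_congr rfl fun i _ => ?_
    rw [← mul_kronecker_mul, single_mul_single_same, one_mul, Dmat_mul_cast]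
  case p6 =>
    intro t ht
    rw [starVs_mul_vs n t ht.1]
    have hsum : ∑ j : Fin n, vfMat n j j t = (1 : Matrix (Fin n) (Fin n) ℂ) ⊗ₖ Dmat n t := by
      simp only [vfMat_eq]
      rw [← sum_kron, sumDiag]
    rw [hsum, ← kron_smul', ← kron_add, Dmat, sub_add_cancel, Matrix.one_kronecker_one]
  case p7 =>
    intro t ht
    rw [vs_mul_starVs n t ht.1, starVs_mul_vs n t ht.1]
    have hDQ : Dmat n t * (∑ i : Fin n, single i.castSucc i.castSucc (1:ℂ)) =
        ∑ i : Fin n, single i.castSucc i.castSucc (1:ℂ) := by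
      rw [Finset.mul_sum]
      exact Finset.sum_congr rfl fun i _ => Dmat_mul_cast n t i _ 1
    have hQD : (∑ i : Fin n, single i.castSucc i.castSucc (1:ℂ)) * Dmat n t =
        ∑ i : Fin n, single i.castSucc i.castSucc (1:ℂ) := by
      rw [Finset.sum_mul]
      exact Finset.sum_congr rfl fun i _ => cast_mul_Dmat n t i _ 1
    have hterm : ∀ j : Fin n,
        vfMat n j 0 t * ((t:ℂ) • (single (0:Fin n) (0:Fin n) 1 ⊗ₖ
            ∑ i : Fin n, single i.castSucc i.castSucc (1:ℂ))) * vfMat n 0 j t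
          = (t:ℂ) • (single j j 1 ⊗ₖ
            ∑ i : Fin n, single i.castSucc i.castSucc (1:ℂ)) := by
      intro j
      rw [mul_smul_comm, smul_mul_assoc, vfMat_eq, vfMat_eq, ← mul_kronecker_mul,
        single_mul_single_same, one_mul, hDQ, ← mul_kronecker_mul,
        single_mul_single_same, one_mul, hQD]
    rw [Finset.sum_congr rfl fun j _ => hterm j, ← Finset.smul_sum, ← sum_kron, sumDiag,
      ← smul_add, ← kron_add]
    have hfull : single (Fin.last n) (Fin.last n) (1:ℂ) +
        ∑ i : Fin n, single i.castSucc i.castSucc (1:ℂ) = 1 := by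
      have h := Fin.sum_univ_castSucc (f := fun b : Fin (n+1) => single b b (1:ℂ))
      rw [sumDiag] at h
      exact (add_comm _ _).trans h.symm
    rw [hfull, Matrix.one_kronecker_one]
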